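/- For every δ with 0 < δ < 1/2, ∫_δ^{1/2} ∫_{1/2}^{1-δ} 1/(ts + (1-t)(1-s)) dμ(t) dμ(s) ≤ (16/π²)·ln(1/δ), where dμ(t) = dt/(π√(t(1-t))). -/

import Mathlib

open MeasureTheory Real intervalIntegral

lemma sqrt2_mul_self : Real.sqrt 2 * Real.sqrt 2 = 2 := Real.mul_self_sqrt (by norm_num)

lemma ptwise_bound {t s : ℝ} (ht0 : 0 < t) (ht : t ≤ 1/2) (hs : 1/2 ≤ s) (hs1 : s < 1) :
    (1 / (t * s + (1 - t) * (1 - s))) * (1 / (π * Real.sqrt (t * (1 - t)))) *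
      (1 / (π * Real.sqrt (s * (1 - s)))) ≤
      4 / (π ^ 2 * Real.sqrt t * Real.sqrt (1 - s) * (t + (1 - s))) := by
  have hu0 : 0 < 1 - s := by linarith
  have hst : (0:ℝ) < √t := Real.sqrt_pos.2 ht0
  have hsu : (0:ℝ) < √(1 - s) := Real.sqrt_pos.2 hu0
  have hs2 : (0:ℝ) < √2 := Real.sqrt_pos.2 (by norm_num)
  have hpi : (0:ℝ) < π := Real.pi_pos
  have hA : 1 / (t * s + (1 - t) * (1 - s)) ≤ 2 / (t + (1 - s)) := by
    have hD : (t + (1 - s)) / 2 ≤ t * s + (1 - t) * (1 - s) := by nlinarith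
    have hDpos : 0 < (t + (1 - s)) / 2 := by linarith
    calc 1 / (t * s + (1 - t) * (1 - s)) ≤ 1 / ((t + (1 - s)) / 2) :=
          one_div_le_one_div_of_le hDpos hD
      _ = 2 / (t + (1 - s)) := one_div_div _ _
  have hB : 1 / (π * √(t * (1 - t))) ≤ √2 / (π * √t) := by
    have h1 : √t / √2 ≤ √(t * (1 - t)) := by
      rw [← Real.sqrt_div ht0.le]
      exact Real.sqrt_le_sqrt (by nlinarith)
    have h2 : (0:ℝ) < √t / √2 := div_pos hst hs2
    calc 1 / (π * √(t * (1 - t))) ≤ 1 / (π * (√t / √2)) :=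
          one_div_le_one_div_of_le (by positivity) (by nlinarith)
      _ = √2 / (π * √t) := by
          rw [show π * (√t / √2) = π * √t / √2 by ring, one_div_div]
  have hC : 1 / (π * √(s * (1 - s))) ≤ √2 / (π * √(1 - s)) := by
    have h1 : √(1 - s) / √2 ≤ √(s * (1 - s)) := by
      rw [← Real.sqrt_div hu0.le]
      exact Real.sqrt_le_sqrt (by nlinarith)
    have h2 : (0:ℝ) < √(1 - s) / √2 := div_pos hsu hs2
    calc 1 / (π * √(s * (1 - s))) ≤ 1 / (π * (√(1 - s) / √2)) :=
          one_div_le_one_div_of_le (by positivity) (by nlinarith)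
      _ = √2 / (π * √(1 - s)) := by
          rw [show π * (√(1 - s) / √2) = π * √(1 - s) / √2 by ring, one_div_div]
  have h3 : (0:ℝ) ≤ 1 / (t * s + (1 - t) * (1 - s)) := by
    have : 0 < t * s + (1 - t) * (1 - s) := by nlinarith
    positivity
  calc (1 / (t * s + (1 - t) * (1 - s))) * (1 / (π * √(t * (1 - t)))) *
        (1 / (π * √(s * (1 - s))))
      ≤ (2 / (t + (1 - s))) * (√2 / (π * √t)) * (√2 / (π * √(1 - s))) := by
        apply mul_le_mul (mul_le_mul hA hB (by positivity) (by positivity)) hC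
          (by positivity) (by positivity)
    _ = (2 * √2 * √2) / ((t + (1 - s)) * (π * √t) * (π * √(1 - s))) := by
        rw [div_mul_div_comm, div_mul_div_comm]
    _ = 4 / (π ^ 2 * √t * √(1 - s) * (t + (1 - s))) := by
        rw [mul_assoc, sqrt2_mul_self, show (2:ℝ) * 2 = 4 by norm_num]
        congr 1
        ring

lemma hderiv_aux {t : ℝ} (ht0 : 0 < t) {s : ℝ} (hs1 : 1 - s > 0) :
    HasDerivAt (fun s : ℝ => -(8 / (π ^ 2 * t)) * Real.arctan (Real.sqrt ((1 - s) / t)))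
      (4 / (π ^ 2 * Real.sqrt t * Real.sqrt (1 - s) * (t + (1 - s)))) s := by
  have hu0 : 0 < (1 - s) / t := div_pos hs1 ht0
  have hsu : (0:ℝ) < √((1 - s) / t) := Real.sqrt_pos.2 hu0
  have hpi : (0:ℝ) < π := Real.pi_pos
  have hst : (0:ℝ) < √t := Real.sqrt_pos.2 ht0
  have h1 : HasDerivAt (fun s : ℝ => (1 - s) / t) (-1 / t) s := by
    have := ((hasDerivAt_const s (1:ℝ)).sub (hasDerivAt_id s)).div_const t
    simpa using this
  have h2 := (h1.sqrt (ne_of_gt hu0)).arctan.const_mul (-(8 / (π ^ 2 * t)))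
  refine h2.congr_deriv ?_
  symm
  have hsq : √((1 - s) / t) ^ 2 = (1 - s) / t := Real.sq_sqrt hu0.le
  have hdiv : √((1 - s) / t) = √(1 - s) / √t := Real.sqrt_div hs1.le t
  have hmul : √(1 - s) * √(1 - s) = 1 - s := Real.mul_self_sqrt hs1.le
  have htt : √t * √t = t := Real.mul_self_sqrt ht0.le
  rw [hsq, hdiv]
  have hsu' : (0:ℝ) < √(1 - s) := Real.sqrt_pos.2 hs1
  have hne : t + (1 - s) ≠ 0 := by positivity
  field_simp
  ring_nf
  rw [Real.sq_sqrt ht0.le]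

lemma inner_bound (δ : ℝ) (h0 : 0 < δ) (h1 : δ < 1/2) {t : ℝ} (ht1 : δ ≤ t) (ht2 : t ≤ 1/2) :
    (∫ s in (1/2 : ℝ)..(1 - δ),
        (1 / (t * s + (1 - t) * (1 - s))) *
          (1 / (π * Real.sqrt (t * (1 - t)))) *
          (1 / (π * Real.sqrt (s * (1 - s))))) ≤ 4 / (π * t) := by
  have ht0 : 0 < t := lt_of_lt_of_le h0 ht1
  have hab : (1/2 : ℝ) ≤ 1 - δ := by linarith
  have hpi : (0:ℝ) < π := Real.pi_pos
  have hst : (0:ℝ) < √t := Real.sqrt_pos.2 ht0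
  set h : ℝ → ℝ := fun s => 4 / (π ^ 2 * √t * √(1 - s) * (t + (1 - s))) with hh
  have hinth : IntervalIntegrable h volume (1/2) (1 - δ) := by
    apply ContinuousOn.intervalIntegrable
    apply continuousOn_const.div
    · fun_prop
    · intro s hs
      rw [Set.uIcc_of_le hab] at hs
      have hs1 : 0 < 1 - s := by
        have := hs.2; linarith
      have : (0:ℝ) < √(1 - s) := Real.sqrt_pos.2 hs1
      positivity
  have hintf : IntervalIntegrable (fun s =>
      (1 / (t * s + (1 - t) * (1 - s))) * (1 / (π * √(t * (1 - t)))) *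
        (1 / (π * √(s * (1 - s))))) volume (1/2) (1 - δ) := by
    apply ContinuousOn.intervalIntegrable
    apply ContinuousOn.mul
    apply ContinuousOn.mul
    · apply continuousOn_const.div
      · fun_prop
      · intro s hs
        rw [Set.uIcc_of_le hab] at hs
        have h2 := hs.1; have h3 := hs.2
        nlinarith
    · exact continuousOn_const
    · apply continuousOn_const.div
      · fun_prop
      · intro s hs
        rw [Set.uIcc_of_le hab] at hs
        have h2 := hs.1; have h3 := hs.2
        have hss : 0 < s * (1 - s) := by nlinarith
        have : (0:ℝ) < √(s * (1 - s)) := Real.sqrt_pos.2 hss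
        positivity
  have step1 : (∫ s in (1/2 : ℝ)..(1 - δ),
      (1 / (t * s + (1 - t) * (1 - s))) * (1 / (π * √(t * (1 - t)))) *
        (1 / (π * √(s * (1 - s))))) ≤ ∫ s in (1/2 : ℝ)..(1 - δ), h s := by
    apply intervalIntegral.integral_mono_on hab hintf hinth
    intro s hs
    exact ptwise_bound ht0 ht2 hs.1 (by linarith [hs.2])
  set H : ℝ → ℝ := fun s => -(8 / (π ^ 2 * t)) * Real.arctan (√((1 - s) / t)) with hH
  have step2 : (∫ s in (1/2 : ℝ)..(1 - δ), h s) = H (1 - δ) - H (1/2) := by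
    apply intervalIntegral.integral_eq_sub_of_hasDerivAt _ hinth
    intro s hs
    rw [Set.uIcc_of_le hab] at hs
    exact hderiv_aux ht0 (by linarith [hs.2])
  have step3 : H (1 - δ) - H (1/2) ≤ 4 / (π * t) := by
    simp only [hH]
    have ha1 : (0:ℝ) ≤ Real.arctan (√((1 - (1 - δ)) / t)) := by
      rw [← Real.arctan_zero]
      exact Real.arctan_strictMono.monotone (Real.sqrt_nonneg _)
    have ha2 : Real.arctan (√((1 - 1/2) / t)) < π / 2 := Real.arctan_lt_pi_div_two _
    have ha3 : (0:ℝ) ≤ Real.arctan (√((1 - 1/2) / t)) := by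
      rw [← Real.arctan_zero]
      exact Real.arctan_strictMono.monotone (Real.sqrt_nonneg _)
    have hc : (0:ℝ) < 8 / (π ^ 2 * t) := by positivity
    have : -(8 / (π ^ 2 * t)) * Real.arctan (√((1 - (1 - δ)) / t)) -
        -(8 / (π ^ 2 * t)) * Real.arctan (√((1 - 1/2) / t)) ≤ 8 / (π ^ 2 * t) * (π / 2) := by
      nlinarith
    refine this.trans (le_of_eq ?_)
    field_simp
    ring
  linarith [step1, step2.le, step2.ge, step3]

theorem rectangle_energy_upper (δ : ℝ) (h0 : 0 < δ) (h1 : δ < 1/2) :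
    (∫ t in δ..(1/2 : ℝ), ∫ s in (1/2 : ℝ)..(1 - δ),
        (1 / (t * s + (1 - t) * (1 - s))) *
          (1 / (Real.pi * Real.sqrt (t * (1 - t)))) *
          (1 / (Real.pi * Real.sqrt (s * (1 - s))))) ≤
      (16 / Real.pi ^ 2) * Real.log (1/δ) := by
  have hpi : (0:ℝ) < π := Real.pi_pos
  have hd2 : δ ≤ 1/2 := h1.le
  set pt : ℝ → ℝ := fun t => max δ (min t (1/2)) with hpt
  set ps : ℝ → ℝ := fun s => max (1/2 : ℝ) (min s (1 - δ)) with hps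
  have hpt_mem : ∀ t, δ ≤ pt t ∧ pt t ≤ 1/2 :=
    fun t => ⟨le_max_left _ _, max_le hd2 (min_le_right _ _)⟩
  have hps_mem : ∀ s, 1/2 ≤ ps s ∧ ps s ≤ 1 - δ :=
    fun s => ⟨le_max_left _ _, max_le (by linarith) (min_le_right _ _)⟩
  have hpt_eq : ∀ t ∈ Set.Icc δ (1/2 : ℝ), pt t = t := by
    intro t ht
    simp only [hpt, min_eq_left ht.2, max_eq_right ht.1]
  have hps_eq : ∀ s ∈ Set.Icc (1/2 : ℝ) (1 - δ), ps s = s := by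
    intro s hs
    simp only [hps, min_eq_left hs.2, max_eq_right hs.1]
  set G : ℝ → ℝ → ℝ := fun t s =>
    (1 / (pt t * ps s + (1 - pt t) * (1 - ps s))) *
      (1 / (π * √(pt t * (1 - pt t)))) * (1 / (π * √(ps s * (1 - ps s)))) with hG
  have hptc : Continuous pt := continuous_const.max (continuous_id.min continuous_const)
  have hpsc : Continuous ps := continuous_const.max (continuous_id.min continuous_const)
  have hGcont : Continuous (Function.uncurry G) := by
    apply Continuous.mul
    apply Continuous.mul
    · apply continuous_const.div
      · fun_prop
      · rintro ⟨t, s⟩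
        have h2 := hpt_mem t; have h3 := hps_mem s
        simp only [Function.uncurry]
        nlinarith [h2.1, h2.2, h3.1, h3.2]
    · apply continuous_const.div
      · fun_prop
      · rintro ⟨t, s⟩
        have h2 := hpt_mem t
        have : (0:ℝ) < pt t * (1 - pt t) := by nlinarith [h2.1, h2.2]
        have : (0:ℝ) < √(pt t * (1 - pt t)) := Real.sqrt_pos.2 this
        simp only [Function.uncurry]
        positivity
    · apply continuous_const.div
      · fun_prop
      · rintro ⟨t, s⟩
        have h3 := hps_mem s
        have : (0:ℝ) < ps s * (1 - ps s) := by nlinarith [h3.1, h3.2]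
        have : (0:ℝ) < √(ps s * (1 - ps s)) := Real.sqrt_pos.2 this
        simp only [Function.uncurry]
        positivity
  have hIcont : Continuous fun t => ∫ s in (1/2 : ℝ)..(1 - δ), G t s :=
    intervalIntegral.continuous_parametric_intervalIntegral_of_continuous' hGcont _ _
  have hcongr : ∀ t ∈ Set.Icc δ (1/2 : ℝ),
      (∫ s in (1/2 : ℝ)..(1 - δ),
        (1 / (t * s + (1 - t) * (1 - s))) * (1 / (π * √(t * (1 - t)))) *
          (1 / (π * √(s * (1 - s))))) = ∫ s in (1/2 : ℝ)..(1 - δ), G t s := by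
    intro t ht
    apply intervalIntegral.integral_congr
    intro s hs
    rw [Set.uIcc_of_le (by linarith : (1/2:ℝ) ≤ 1 - δ)] at hs
    simp only [hG, hpt_eq t ht, hps_eq s hs]
  calc (∫ t in δ..(1/2 : ℝ), ∫ s in (1/2 : ℝ)..(1 - δ),
        (1 / (t * s + (1 - t) * (1 - s))) * (1 / (π * √(t * (1 - t)))) *
          (1 / (π * √(s * (1 - s)))))
      = ∫ t in δ..(1/2 : ℝ), ∫ s in (1/2 : ℝ)..(1 - δ), G t s := by
        apply intervalIntegral.integral_congr
        intro t ht
        rw [Set.uIcc_of_le hd2] at ht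
        exact hcongr t ht
    _ ≤ ∫ t in δ..(1/2 : ℝ), 4 / (π * t) := by
        apply intervalIntegral.integral_mono_on hd2 (hIcont.intervalIntegrable _ _)
        · apply ContinuousOn.intervalIntegrable
          apply continuousOn_const.div
          · fun_prop
          · intro x hx
            rw [Set.uIcc_of_le hd2] at hx
            have hx0 : 0 < x := lt_of_lt_of_le h0 hx.1
            positivity
        · intro t ht
          rw [← hcongr t ht]
          exact inner_bound δ h0 h1 ht.1 ht.2
    _ = 4 / π * Real.log ((1/2) / δ) := by
        have : ∀ t : ℝ, 4 / (π * t) = (4 / π) * (1 / t) := by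
          intro t; field_simp
        simp_rw [this]
        rw [intervalIntegral.integral_const_mul, integral_one_div_of_pos h0 (by norm_num)]
    _ ≤ (16 / π ^ 2) * Real.log (1/δ) := by
        have hlog1 : Real.log ((1/2) / δ) ≤ Real.log (1/δ) := by
          apply Real.log_le_log (by positivity)
          rw [div_le_div_iff₀ (by positivity) h0]
          linarith
        have hlog0 : 0 ≤ Real.log (1/δ) := Real.log_nonneg (by
          rw [le_div_iff₀ h0]; linarith)
        have hc : 4 / π ≤ 16 / π ^ 2 := by
          rw [div_le_div_iff₀ hpi (by positivity)]
          nlinarith [Real.pi_le_four]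
        calc 4 / π * Real.log ((1/2) / δ) ≤ 4 / π * Real.log (1/δ) :=
              mul_le_mul_of_nonneg_left hlog1 (by positivity)
          _ ≤ (16 / π ^ 2) * Real.log (1/δ) := mul_le_mul_of_nonneg_right hc hlog0
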